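/- A topological space X is k₁-Hausdorff if and only if every compact subspace of X is both closed in X and Hausdorff in the subspace topology. -/
import Mathlib


open Set Filter Topology

universe u

/-- A subset `C` of a space `X` is k₁-closed provided for every compact subset `K` of `X`,
the intersection `C ∩ K` is closed in the subspace topology on `K`. -/
def IsK1Closed {X : Type u} [TopologicalSpace X] (C : Set X) : Prop :=
  ∀ K : Set X, IsCompact K → IsClosed ((Subtype.val : K → X) ⁻¹' C)

/-- A space is k₁-Hausdorff provided its diagonal is k₁-closed in its square. -/
def K1Hausdorff (X : Type u) [TopologicalSpace X] : Prop :=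
  IsK1Closed {p : X × X | p.1 = p.2}

/-- A space is KC provided every compact subset is closed. -/
def KCSpace (X : Type u) [TopologicalSpace X] : Prop :=
  ∀ K : Set X, IsCompact K → IsClosed K

/-- A space `X` is weakly Hausdorff provided for every compact Hausdorff space `K` and
continuous `f : K → X`, the image of `f` is closed in `X`. -/
def WeaklyHausdorff (X : Type u) [TopologicalSpace X] : Prop :=
  ∀ (K : Type u) [TopologicalSpace K] [CompactSpace K] [T2Space K]
    (f : K → X), Continuous f → IsClosed (Set.range f)

/-- A subset `C` of `X` is k₂-closed provided for every compact Hausdorff space `K` and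
continuous `f : K → X`, the preimage `f ⁻¹' C` is closed in `K`. -/
def IsK2Closed {X : Type u} [TopologicalSpace X] (C : Set X) : Prop :=
  ∀ (K : Type u) [TopologicalSpace K] [CompactSpace K] [T2Space K]
    (f : K → X), Continuous f → IsClosed (f ⁻¹' C)

/-- A space is k₂-Hausdorff provided its diagonal is k₂-closed in its square. -/
def K2Hausdorff (X : Type u) [TopologicalSpace X] : Prop :=
  IsK2Closed {p : X × X | p.1 = p.2}

/-- A space has unique sequential limits provided every convergent sequence has a unique limit. -/
def UniqueSequentialLimits (X : Type u) [TopologicalSpace X] : Prop :=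
  ∀ (a : ℕ → X) (l₀ l₁ : X),
    Filter.Tendsto a Filter.atTop (nhds l₀) →
    Filter.Tendsto a Filter.atTop (nhds l₁) → l₀ = l₁

/-- A space is k₁-Hausdorff iff every compact subspace is closed and Hausdorff. -/
theorem k1Hausdorff_iff_compact_closed_and_hausdorff (X : Type u) [TopologicalSpace X] :
    K1Hausdorff X ↔ ∀ K : Set X, IsCompact K → IsClosed K ∧ T2Space K := by
  constructor
  · intro h K hK
    have key : ∀ L : Set X, IsCompact L →
        IsClosed ((Subtype.val : L → X) ⁻¹' K) := by
      intro L hL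
      have hD := h (K ×ˢ L) (hK.prod hL)
      set g : ↥K × ↥L → ↥(K ×ˢ L) := fun p => ⟨(p.1.1, p.2.1), p.1.2, p.2.2⟩ with hg
      have hgc : Continuous g := by
        apply Continuous.subtype_mk
        exact (continuous_subtype_val.comp continuous_fst).prodMk
          (continuous_subtype_val.comp continuous_snd)
      have hD' : IsClosed (g ⁻¹' ((Subtype.val) ⁻¹' {p : X × X | p.1 = p.2})) :=
        hD.preimage hgc
      haveI : CompactSpace ↥K := isCompact_iff_compactSpace.mp hK
      have himg := isClosedMap_snd_of_compactSpace _ hD'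
      convert himg using 1
      ext b
      simp only [Set.mem_image, Set.mem_preimage, Set.mem_setOf_eq, hg]
      constructor
      · intro hb
        exact ⟨(⟨⟨b.1, hb⟩, b⟩), rfl, rfl⟩
      · rintro ⟨⟨a, b'⟩, hab, rfl⟩
        simp only at hab
        exact hab ▸ a.2
    refine ⟨isClosed_of_closure_subset fun x hx => ?_, ?_⟩
    · have hL : IsCompact (insert x K) := hK.insert x
      have hcl := key _ hL
      have hxm : x ∈ insert x K := mem_insert x K
      have hmem : (⟨x, hxm⟩ : ↥(insert x K)) ∈ closure ((Subtype.val) ⁻¹' K) := by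
        rw [closure_subtype]
        have : (Subtype.val : ↥(insert x K) → X) '' ((Subtype.val) ⁻¹' K) = K := by
          rw [Subtype.image_preimage_coe]
          exact Set.inter_eq_right.mpr (Set.subset_insert x K)
        rw [this]
        exact hx
      have := hcl.closure_eq ▸ hmem
      exact this
    · rw [t2_iff_isClosed_diagonal]
      have hD := h (K ×ˢ K) (hK.prod hK)
      set g : ↥K × ↥K → ↥(K ×ˢ K) := fun p => ⟨(p.1.1, p.2.1), p.1.2, p.2.2⟩ with hg
      have hgc : Continuous g := by
        apply Continuous.subtype_mk
        exact (continuous_subtype_val.comp continuous_fst).prodMk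
          (continuous_subtype_val.comp continuous_snd)
      have hD' := hD.preimage hgc
      convert hD' using 1
      ext ⟨a, b⟩
      simp [Set.diagonal, hg, Subtype.ext_iff]
  · intro h L hL
    set K := (Prod.fst '' L) ∪ (Prod.snd '' L) with hKdef
    have hKc : IsCompact K := (hL.image continuous_fst).union (hL.image continuous_snd)
    haveI : T2Space K := (h K hKc).2
    have hm1 : ∀ p : ↥L, (p : X × X).1 ∈ K := fun p => Or.inl ⟨p, p.2, rfl⟩
    have hm2 : ∀ p : ↥L, (p : X × X).2 ∈ K := fun p => Or.inr ⟨p, p.2, rfl⟩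
    set f : ↥L → ↥K × ↥K := fun p => (⟨(p : X × X).1, hm1 p⟩, ⟨(p : X × X).2, hm2 p⟩) with hf
    have hfc : Continuous f := by
      exact Continuous.prodMk
        (Continuous.subtype_mk (continuous_fst.comp continuous_subtype_val) _)
        (Continuous.subtype_mk (continuous_snd.comp continuous_subtype_val) _)
    have hdiag : IsClosed (Set.diagonal ↥K) := isClosed_diagonal
    have hpre := hdiag.preimage hfc
    convert hpre using 1
    ext p
    simp [hf, Set.diagonal, Subtype.ext_iff]
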